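/- Let G be a subgroup of S_d acting freely and transitively on {1,...,d}, and let m ≥ 2 be coprime to d. Then the sum over all classes [(g_1,...,g_m)] ∈ S(G,m) of the polynomials φ_{(g_1,...,g_m)}(x_1,...,x_d) = Σ_{i=1}^d x_{g_1(i)}⋯x_{g_m(i)} equals f_{d,m}(x_1,...,x_d), the sum of all monomials of total degree m in the variables x_1,...,x_d (each with coefficient 1). -/

import Mathlib

open Finset

section Aux

lemma card_subtype_eq_count' {α β : Type*} [Fintype α] [DecidableEq β] (g : α → β) (b : β) :
    Fintype.card {x // g x = b} = Multiset.count b (Multiset.map g Finset.univ.val) := by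
  rw [Multiset.count_map, Fintype.card_subtype]
  have : Multiset.filter (fun a => b = g a) Finset.univ.val
      = Multiset.filter (fun a => g a = b) Finset.univ.val :=
    Multiset.filter_congr (fun x _ => eq_comm)
  rw [this, ← Finset.filter_val]
  rfl

lemma exists_perm_comp' {α β : Type*} [Fintype α] [DecidableEq α] [DecidableEq β]
    (f f' : α → β) (h : Multiset.map f Finset.univ.val = Multiset.map f' Finset.univ.val) :
    ∃ σ : Equiv.Perm α, ∀ r, f (σ r) = f' r := by
  have hcard : ∀ b, Fintype.card {x // f' x = b} = Fintype.card {x // f x = b} := by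
    intro b
    rw [card_subtype_eq_count', card_subtype_eq_count', h]
  have e : ∀ b, {x // f' x = b} ≃ {x // f x = b} := fun b => Fintype.equivOfCardEq (hcard b)
  exact ⟨Equiv.ofFiberEquiv e, fun r => Equiv.ofFiberEquiv_map e r⟩

lemma orderOf_dvd_card_of_mul_invariant' {G : Type*} [Group G] [Fintype G] [DecidableEq G]
    (k : G) (M : Multiset G) (hM : Multiset.map (· * k) M = M) :
    orderOf k ∣ Multiset.card M := by
  classical
  have hcount : ∀ h : G, Multiset.count (h * k) M = Multiset.count h M := by
    intro h
    conv_lhs => rw [← hM]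
    exact Multiset.count_map_eq_count' _ _ (mul_left_injective k) h
  have hzpow : ∀ (h x : G), x ∈ Subgroup.zpowers k →
      Multiset.count (h * x) M = Multiset.count h M := by
    intro h x hx
    obtain ⟨j, rfl⟩ := hx
    simp only
    induction j using Int.induction_on generalizing h with
    | zero => simp
    | succ i ih =>
        have e : h * k ^ ((i : ℤ) + 1) = (h * k ^ (i : ℤ)) * k := by group
        rw [e, hcount, ih]
    | pred i ih =>
        have e : (h * k ^ (-(i : ℤ) - 1)) * k = h * k ^ (-(i : ℤ)) := by group
        rw [← ih h, ← e, hcount]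
  have hcardsum : Multiset.card M = ∑ h : G, Multiset.count h M := by
    rw [← Multiset.toFinset_sum_count_eq M]
    refine Finset.sum_subset (Finset.subset_univ _) ?_
    intro x _ hx
    simpa [Multiset.count_eq_zero] using fun h => hx (Multiset.mem_toFinset.mpr h)
  set H := Subgroup.zpowers k with hH
  have hfib : ∑ h : G, Multiset.count h M
      = ∑ q : G ⧸ H, ∑ h ∈ Finset.univ.filter (fun h : G => QuotientGroup.mk h = q),
          Multiset.count h M :=
    (Finset.sum_fiberwise _ _ _).symm
  have hconst : ∀ q : G ⧸ H,
      ∑ h ∈ Finset.univ.filter (fun h : G => QuotientGroup.mk h = q), Multiset.count h M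
      = orderOf k * Multiset.count q.out M := by
    intro q
    have hmemiff : ∀ h : G, QuotientGroup.mk h = q ↔ ∃ x : H, q.out * (x : G) = h := by
      intro h
      constructor
      · intro hh
        refine ⟨⟨q.out⁻¹ * h, ?_⟩, by group⟩
        rw [← QuotientGroup.eq, QuotientGroup.out_eq', hh]
      · rintro ⟨x, rfl⟩
        rw [QuotientGroup.mk_mul_of_mem _ x.2, QuotientGroup.out_eq']
    have hc : ∀ h ∈ Finset.univ.filter (fun h : G => QuotientGroup.mk h = q),
        Multiset.count h M = Multiset.count q.out M := by
      intro h hh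
      rw [Finset.mem_filter] at hh
      obtain ⟨x, rfl⟩ := (hmemiff h).mp hh.2
      exact hzpow _ _ x.2
    rw [Finset.sum_congr rfl hc, Finset.sum_const, smul_eq_mul]
    congr 1
    rw [← Fintype.card_zpowers (x := k), ← Fintype.card_subtype]
    refine Fintype.card_congr ?_
    exact
      { toFun := fun y => ⟨q.out⁻¹ * y.1, by
          have h2 : (QuotientGroup.mk q.out : G ⧸ H) = QuotientGroup.mk y.1 := by
            rw [QuotientGroup.out_eq', y.2]
          exact QuotientGroup.eq.mp h2⟩
        invFun := fun x => ⟨q.out * x.1, (hmemiff _).mpr ⟨x, rfl⟩⟩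
        left_inv := fun y => by ext; simp
        right_inv := fun x => by ext; simp }
  have : Multiset.card M = orderOf k * ∑ q : G ⧸ H, Multiset.count q.out M := by
    rw [hcardsum, hfib, Finset.sum_congr rfl fun q _ => hconst q, Finset.mul_sum]
  exact this ▸ Dvd.intro _ rfl

lemma sum_count_univ' {β : Type*} [Fintype β] [DecidableEq β] (s : Multiset β) :
    ∑ b : β, s.count b = Multiset.card s := by
  rw [← Multiset.toFinset_sum_count_eq s]
  refine (Finset.sum_subset (Finset.subset_univ _) ?_).symm
  intro x _ hx
  simpa [Multiset.count_eq_zero] using fun h => hx (Multiset.mem_toFinset.mpr h)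

lemma prod_X_pow_count' {d m : ℕ} {R : Type*} [CommRing R] (f : Fin m → Fin d) :
    ∏ r : Fin m, (MvPolynomial.X (f r) : MvPolynomial (Fin d) R)
      = ∏ j : Fin d, MvPolynomial.X j ^ Multiset.count j (Multiset.map f Finset.univ.val) := by
  classical
  rw [← Finset.prod_fiberwise Finset.univ f
    (fun r => (MvPolynomial.X (f r) : MvPolynomial (Fin d) R))]
  refine Finset.prod_congr rfl fun j _ => ?_
  have h1 : ∀ r ∈ Finset.univ.filter (fun r => f r = j),
      (MvPolynomial.X (f r) : MvPolynomial (Fin d) R) = MvPolynomial.X j := by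
    intro r hr
    rw [(Finset.mem_filter.mp hr).2]
  rw [Finset.prod_congr rfl h1, Finset.prod_const]
  congr 1
  rw [← card_subtype_eq_count', Fintype.card_subtype]

lemma exists_tuple_of_card' {β : Type*} [Inhabited β] {m : ℕ} (A : Multiset β)
    (h : Multiset.card A = m) :
    ∃ v : Fin m → β, Multiset.map v Finset.univ.val = A := by
  refine ⟨fun r => A.toList.getD r default, ?_⟩
  have hlen : A.toList.length = m := by rw [Multiset.length_toList, h]
  have huniv : (Finset.univ.val : Multiset (Fin m)) = (List.finRange m : List (Fin m)) := rfl
  have hlist : (List.finRange m).map (fun r : Fin m => A.toList.getD r default) = A.toList := by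
    apply List.ext_getElem
    · simp [hlen]
    · intro i h1 h2
      simp only [List.getElem_map, List.getElem_finRange]
      exact List.getD_eq_getElem _ _ (by omega)
  calc Multiset.map (fun r : Fin m => A.toList.getD r default) Finset.univ.val
      = ((List.finRange m).map (fun r : Fin m => A.toList.getD r default) : Multiset β) := by
        rw [huniv]; rfl
    _ = (A.toList : Multiset β) := by rw [hlist]
    _ = A := Multiset.coe_toList A

end Aux



/-- The relation on `m`-tuples of elements of `G` identifying two tuples iff one is
obtained from the other by permuting the coordinates and simultaneously multiplying
every coordinate on the right by a fixed element of `G`. -/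
def SGmRel (G : Type*) [Group G] (m : ℕ) (a b : Fin m → G) : Prop :=
  ∃ (σ : Equiv.Perm (Fin m)) (g : G), ∀ r, b r = a (σ r) * g

/-- `S(G,m) = (G^m / S_m) / G`: the quotient of `G^m` by permutation of coordinates
and simultaneous right multiplication. -/
def SGm (G : Type*) [Group G] (m : ℕ) : Type _ :=
  Quot (SGmRel G m)

lemma SGmRel.equivalence (G : Type*) [Group G] (m : ℕ) : Equivalence (SGmRel G m) := by
  constructor
  · exact fun a => ⟨1, 1, by simp⟩
  · rintro a b ⟨σ, g, h⟩
    refine ⟨σ⁻¹, g⁻¹, fun r => ?_⟩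
    rw [h (σ⁻¹ r)]
    simp
  · rintro a b c ⟨σ, g, h⟩ ⟨τ, g', h'⟩
    refine ⟨τ.trans σ, g * g', fun r => ?_⟩
    rw [h' r, h (τ r)]
    simp [mul_assoc]

/-- Let `G ≤ S_d` act freely and transitively on `{1,...,d}` and `m ≥ 2` be coprime to
`d`. The sum over all classes `c ∈ S(G,m)` of the (well-defined) polynomials
`φ_c = ∑_{i=1}^d ∏_r X_{g_r(i)}` equals the sum of all monomials of total degree `m`
in `X_1, ..., X_d`. -/
theorem stmt5 (d m : ℕ) (hm : 2 ≤ m) (hcop : Nat.Coprime m d)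
    (G : Subgroup (Equiv.Perm (Fin d)))
    (hreg : ∀ i j : Fin d, ∃! g : G, (g : Equiv.Perm (Fin d)) i = j)
    (R : Type*) [CommRing R]
    (Φ : SGm (↥G) m → MvPolynomial (Fin d) R)
    (hΦ : ∀ g : Fin m → ↥G,
      Φ (Quot.mk (SGmRel (↥G) m) g) =
        ∑ i : Fin d, ∏ r : Fin m, MvPolynomial.X ((g r : Equiv.Perm (Fin d)) i)) :
    ∑ᶠ c : SGm (↥G) m, Φ c =
      ∑ a ∈ (Fintype.piFinset fun _ : Fin d => Finset.range (m + 1)).filter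
          (fun a => ∑ i, a i = m),
        ∏ i : Fin d, (MvPolynomial.X i : MvPolynomial (Fin d) R) ^ a i := by
  classical
  -- d is positive
  have hd : 0 < d := by
    rcases Nat.eq_zero_or_pos d with h | h
    · exfalso
      subst h
      rw [Nat.coprime_zero_right] at hcop
      omega
    · exact h
  have i₀ : Fin d := ⟨0, hd⟩
  haveI : Fintype ↥G := Fintype.ofFinite _
  haveI : Finite (SGm ↥G m) := Finite.of_surjective _ (Quot.mk_surjective (r := SGmRel ↥G m))
  haveI : Fintype (SGm ↥G m) := Fintype.ofFinite _
  -- the cardinality of G is d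
  have hGcard : Fintype.card ↥G = d := by
    have hbij : Function.Bijective (fun h : ↥G => (h : Equiv.Perm (Fin d)) i₀) := by
      constructor
      · intro h₁ h₂ hh
        exact (hreg i₀ ((h₂ : Equiv.Perm (Fin d)) i₀)).unique hh rfl
      · intro j
        obtain ⟨g, hg, -⟩ := hreg i₀ j
        exact ⟨g, hg⟩
    rw [Fintype.card_of_bijective hbij, Fintype.card_fin]
  -- rewrite the finsum as a finite sum
  rw [finsum_eq_sum_of_fintype]
  -- the count-vector map
  set F : SGm ↥G m × Fin d → Fin d → ℕ := fun p j =>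
    Multiset.count j (Multiset.map
      (fun r => ((Quot.out p.1 r : Equiv.Perm (Fin d))) p.2) Finset.univ.val) with hF
  -- rewrite the left side as a sum over pairs
  have hstep1 : ∑ c : SGm ↥G m, Φ c
      = ∑ p : SGm ↥G m × Fin d, ∏ j : Fin d,
          (MvPolynomial.X j : MvPolynomial (Fin d) R) ^ F p j := by
    rw [Fintype.sum_prod_type]
    refine Finset.sum_congr rfl fun c _ => ?_
    calc Φ c = Φ (Quot.mk (SGmRel ↥G m) (Quot.out c)) := by exact (congrArg Φ (Quot.out_eq c)).symm
      _ = ∑ i : Fin d, ∏ r : Fin m,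
            MvPolynomial.X ((Quot.out c r : Equiv.Perm (Fin d)) i) := hΦ _
      _ = _ := by
          refine Finset.sum_congr rfl fun i _ => ?_
          rw [prod_X_pow_count' (fun r => (Quot.out c r : Equiv.Perm (Fin d)) i)]
  rw [hstep1]
  -- now a bijection between pairs and exponent vectors
  refine Finset.sum_bij (fun p _ => F p) ?_ ?_ ?_ ?_
  · -- membership
    intro p _
    rw [Finset.mem_filter]
    constructor
    · rw [Fintype.mem_piFinset]
      intro j
      rw [Finset.mem_range, Nat.lt_succ_iff]
      calc F p j ≤ Multiset.card (Multiset.map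
            (fun r => ((Quot.out p.1 r : Equiv.Perm (Fin d))) p.2) Finset.univ.val) :=
          Multiset.count_le_card _ _
        _ = m := by simp
    · rw [hF]
      simp only
      rw [sum_count_univ']
      simp
  · -- injectivity
    intro p₁ hp₁ p₂ hp₂ hFeq
    obtain ⟨c, i⟩ := p₁
    obtain ⟨c', i'⟩ := p₂
    have hMeq : Multiset.map (fun r => (Quot.out c r : Equiv.Perm (Fin d)) i) Finset.univ.val
        = Multiset.map (fun r => (Quot.out c' r : Equiv.Perm (Fin d)) i') Finset.univ.val := by
      refine Multiset.ext.mpr fun j => ?_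
      exact congrFun hFeq j
    obtain ⟨k, hk, -⟩ := hreg i' i
    have hψinj : Function.Injective (fun h : ↥G => (h : Equiv.Perm (Fin d)) i') := by
      intro h₁ h₂ hh
      exact (hreg i' ((h₂ : Equiv.Perm (Fin d)) i')).unique hh rfl
    have hmap : Multiset.map (fun r => Quot.out c r * k) Finset.univ.val
        = Multiset.map (Quot.out c') Finset.univ.val := by
      apply Multiset.map_injective hψinj
      rw [Multiset.map_map, Multiset.map_map]
      have e1 : ((fun h : ↥G => (h : Equiv.Perm (Fin d)) i') ∘ fun r => Quot.out c r * k)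
          = fun r => (Quot.out c r : Equiv.Perm (Fin d)) i := by
        funext r
        simp only [Function.comp_apply, Subgroup.coe_mul, Equiv.Perm.mul_apply, hk]
      have e2 : ((fun h : ↥G => (h : Equiv.Perm (Fin d)) i') ∘ Quot.out c')
          = fun r => (Quot.out c' r : Equiv.Perm (Fin d)) i' := rfl
      rw [e1, e2, hMeq]
    obtain ⟨σ, hσ⟩ := exists_perm_comp' _ _ hmap
    have hcc : c = c' := by
      have h1 : Quot.mk (SGmRel ↥G m) (Quot.out c) = Quot.mk (SGmRel ↥G m) (Quot.out c') :=
        Quot.sound ⟨σ, k, fun r => (hσ r).symm⟩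
      rw [Quot.out_eq c, Quot.out_eq c'] at h1
      exact h1
    subst hcc
    have hinv : Multiset.map (· * k) (Multiset.map (Quot.out c) Finset.univ.val)
        = Multiset.map (Quot.out c) Finset.univ.val := by
      rw [Multiset.map_map]
      exact hmap
    have hdvd1 : orderOf k ∣ m := by
      have := orderOf_dvd_card_of_mul_invariant' k _ hinv
      simpa using this
    have hdvd2 : orderOf k ∣ d := by
      have h2 := orderOf_dvd_card (x := k)
      rwa [hGcard] at h2
    have hk1 : k = 1 := by
      rw [← orderOf_eq_one_iff]
      exact Nat.dvd_one.mp (hcop ▸ Nat.dvd_gcd hdvd1 hdvd2)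
    have : i = i' := by
      rw [hk1] at hk
      simpa using hk.symm
    rw [this]
  · -- surjectivity
    intro b hb
    rw [Finset.mem_filter, Fintype.mem_piFinset] at hb
    obtain ⟨hb1, hb2⟩ := hb
    haveI : Inhabited (Fin d) := ⟨i₀⟩
    set A : Multiset (Fin d) := ∑ j : Fin d, b j • ({j} : Multiset (Fin d)) with hA
    have hAcount : ∀ j, Multiset.count j A = b j := by
      intro j
      rw [hA, Multiset.count_sum']
      rw [Finset.sum_eq_single j]
      · simp
      · intro j' _ hj'
        simp [Multiset.count_singleton, (Ne.symm hj')]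
      · simp
    have hAcard : Multiset.card A = m := by
      rw [← sum_count_univ' A, Finset.sum_congr rfl fun j _ => hAcount j]
      exact hb2
    obtain ⟨v, hv⟩ := exists_tuple_of_card' A hAcard
    -- build the tuple of group elements
    set g : Fin m → ↥G := fun r => (hreg i₀ (v r)).choose with hg
    have hgspec : ∀ r, ((g r : Equiv.Perm (Fin d))) i₀ = v r := fun r =>
      (hreg i₀ (v r)).choose_spec.1
    set c : SGm ↥G m := Quot.mk (SGmRel ↥G m) g with hc
    -- relate Quot.out c to g
    have hrel : SGmRel ↥G m g (Quot.out c) := by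
      have h1 : Quot.mk (SGmRel ↥G m) g = Quot.mk (SGmRel ↥G m) (Quot.out c) :=
        (Quot.out_eq c).symm
      exact (SGmRel.equivalence ↥G m).eqvGen_iff.mp (Quot.eqvGen_exact h1)
    obtain ⟨σ, k', hσ⟩ := hrel
    set i : Fin d := ((k'⁻¹ : ↥G) : Equiv.Perm (Fin d)) i₀ with hi
    refine ⟨(c, i), Finset.mem_univ _, ?_⟩
    funext j
    rw [hF]
    simp only
    have hout : ∀ r, (Quot.out c r : Equiv.Perm (Fin d)) i = (g (σ r) : Equiv.Perm (Fin d)) i₀ := by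
      intro r
      rw [hσ r]
      simp only [Subgroup.coe_mul, Equiv.Perm.mul_apply, hi]
      congr 1
      have : ((k' : ↥G) : Equiv.Perm (Fin d)) (((k'⁻¹ : ↥G) : Equiv.Perm (Fin d)) i₀) = i₀ := by
        rw [← Equiv.Perm.mul_apply, ← Subgroup.coe_mul, mul_inv_cancel]
        simp
      exact this
    have hmapeq : Multiset.map (fun r => (Quot.out c r : Equiv.Perm (Fin d)) i) Finset.univ.val
        = A := by
      calc Multiset.map (fun r => (Quot.out c r : Equiv.Perm (Fin d)) i) Finset.univ.val
          = Multiset.map (fun r => (g (σ r) : Equiv.Perm (Fin d)) i₀) Finset.univ.val := by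
            refine Multiset.map_congr rfl fun r _ => hout r
        _ = Multiset.map ((fun r => (g r : Equiv.Perm (Fin d)) i₀) ∘ σ) Finset.univ.val := rfl
        _ = Multiset.map (fun r => (g r : Equiv.Perm (Fin d)) i₀)
              (Multiset.map σ Finset.univ.val) := by rw [Multiset.map_map]
        _ = Multiset.map (fun r => (g r : Equiv.Perm (Fin d)) i₀) Finset.univ.val := by
            congr 1
            have := Finset.map_univ_equiv (σ : Equiv.Perm (Fin m))
            calc Multiset.map (σ : Fin m → Fin m) Finset.univ.val
                = (Finset.univ.map (σ : Equiv.Perm (Fin m)).toEmbedding).val := by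
                  rw [Finset.map_val]; rfl
              _ = Finset.univ.val := by rw [this]
        _ = Multiset.map v Finset.univ.val := by
            refine Multiset.map_congr rfl fun r _ => hgspec r
        _ = A := hv
    rw [hmapeq, hAcount]
  · -- terms agree
    intro p _
    rfl
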